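/- Parallel reduction correctness for associative commutative monoid operations: for a vector t : Fin l → Bool and the reduction pattern 'for k = 1, 2, 4, ..., while k < l: for each i ≡ 0 mod 2k with i + k < l, set t[i] := t[i] AND t[i+k]', the final value of t[0] equals the AND of all original entries t[0], ..., t[l-1]. -/

import Mathlib

def redStep (op : Bool → Bool → Bool) (l k : ℕ) (t : ℕ → Bool) : ℕ → Bool :=
  fun i => if i % (2 * k) = 0 ∧ i + k < l then op (t i) (t (i + k)) else t i

def redRun (op : Bool → Bool → Bool) (l : ℕ) (t : ℕ → Bool) : ℕ → Bool :=
  (List.range l).foldl (fun t j => if 2 ^ j < l then redStep op l (2 ^ j) t else t) t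

lemma all_foldr14 (t : ℕ → Bool) : ∀ xs : List ℕ,
    xs.all t = xs.foldr (fun x y => t x && y) true := by
  intro xs; induction xs with
  | nil => simp
  | cons a xs ih => simp [ih]

lemma key14 (l : ℕ) (t : ℕ → Bool) (m : ℕ) :
    ∀ i, i % 2 ^ m = 0 → i < l →
      (List.range m).foldl (fun t j => if 2 ^ j < l then redStep (· && ·) l (2 ^ j) t else t) t i
        = (List.Ico i (min (i + 2 ^ m) l)).all t := by
  induction m with
  | zero =>
    intro i _ hil
    simp only [pow_zero, List.range_zero, List.foldl_nil]
    rw [min_eq_left (by omega), List.Ico.succ_singleton]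
    simp
  | succ m ih =>
    intro i hmod hil
    have hdvd : 2 ^ m ∣ i := dvd_trans (pow_dvd_pow 2 (Nat.le_succ m)) (Nat.dvd_of_mod_eq_zero hmod)
    have hmod' : i % 2 ^ m = 0 := Nat.eq_zero_of_dvd_of_lt (Nat.dvd_sub hdvd hdvd) (by omega) ▸ Nat.mod_eq_zero_of_dvd hdvd
    rw [List.range_succ, List.foldl_append, List.foldl_cons, List.foldl_nil]
    by_cases hg : 2 ^ m < l
    · simp only [if_pos hg, redStep]
      by_cases hik : i + 2 ^ m < l
      · have hc : i % (2 * 2 ^ m) = 0 := by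
          rw [show 2 * 2 ^ m = 2 ^ (m + 1) by ring]; exact hmod
        rw [if_pos ⟨hc, hik⟩, ih i hmod' hil,
          ih (i + 2 ^ m) (by simp [Nat.add_mod, hmod']) hik]
        have h1 : min (i + 2 ^ m) l = i + 2 ^ m := by omega
        have h2 : min (i + 2 ^ m + 2 ^ m) l = min (i + 2 ^ (m + 1)) l := by
          rw [pow_succ]; omega
        rw [h1, h2, ← List.all_append, List.Ico.append_consecutive (by omega) (by omega)]
      · rw [if_neg (by tauto), ih i hmod' hil]
        have h2 : min (i + 2 ^ m) l = min (i + 2 ^ (m + 1)) l := by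
          rw [pow_succ]; omega
        rw [h2]
    · rw [if_neg hg, ih i hmod' hil]
      have h2 : min (i + 2 ^ m) l = min (i + 2 ^ (m + 1)) l := by
        rw [pow_succ]; omega
      rw [h2]

theorem stmt14 (l : ℕ) (hl : 0 < l) (t : ℕ → Bool) :
    redRun (· && ·) l t 0 = ((List.range l).map t).foldr (· && ·) true := by
  have h := key14 l t l 0 (by simp) hl
  rw [redRun, h]
  have hmin : min (0 + 2 ^ l) l = l := by
    have := Nat.lt_two_pow_self (n := l)
    omega
  rw [hmin, List.Ico.zero_bot, List.foldr_map, all_foldr14]
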